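/- Let n ≥ 2 and m ≥ 1 be integers and consider the quiver Γ^1_{A_{nm−1}} of diagonals of the regular (nm+2)-gon. (a) If D is an m-diagonal and there is a sectional path of length m in Γ^1_{A_{nm−1}} from D to a diagonal D′, then D′ is an m-diagonal; likewise if there is a sectional path of length m from a diagonal D to an m-diagonal D′, then D is an m-diagonal; and τ_1^m(D) = τ_m(D) is an m-diagonal whenever D is. (b) For m-diagonals D and D′, there is a sectional path of length m from D to D′ in Γ^1_{A_{nm−1}} if and only if there is an arrow from D to D′ in Γ^m_{A_{n−1}}. Consequently Γ^m_{A_{n−1}} is a connected component of the m-th power (Γ^1_{A_{nm−1}})^m. -/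

import Mathlib

/-- A diagonal of the regular `(n*m+2)`-gon with vertices labelled by
`ZMod (n*m+2)`: an unordered pair `{a,b}` with `b ∉ {a-1, a, a+1}`. -/
def IsDiag (n m : ℕ) (p : Sym2 (ZMod (n*m+2))) : Prop :=
  ∃ a b : ZMod (n*m+2), p = s(a, b) ∧ b ≠ a ∧ b ≠ a + 1 ∧ b ≠ a - 1

/-- An `m`-diagonal: an unordered pair of the form `{i, i+k*m+1}` with
`1 ≤ k ≤ n-1`. -/
def IsMDiagonal (n m : ℕ) (p : Sym2 (ZMod (n*m+2))) : Prop :=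
  ∃ (i : ZMod (n*m+2)) (k : ℕ), 1 ≤ k ∧ k ≤ n - 1 ∧
    p = s(i, i + ((k*m+1 : ℕ) : ZMod (n*m+2)))

/-- An arrow `D → D'` of the quiver `Γ^1_{A_{nm-1}}` of diagonals:
`D` and `D'` are diagonals, and `D'` is obtained from `D = {a,b}` by replacing
the endpoint `b` by `b+1`. -/
def Arrow1 (n m : ℕ) (D D' : Sym2 (ZMod (n*m+2))) : Prop :=
  IsDiag n m D ∧ IsDiag n m D' ∧
    ∃ a b : ZMod (n*m+2), D = s(a, b) ∧ D' = s(a, b + 1)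

/-- The translation `τ_1` of `Γ^1_{A_{nm-1}}`, sending `{a,b}` to `{a-1,b-1}`. -/
def tau1 (n m : ℕ) : Sym2 (ZMod (n*m+2)) → Sym2 (ZMod (n*m+2)) :=
  Sym2.map (fun x => x - 1)

/-- The translation `τ_m` of `Γ^m_{A_{n-1}}`, sending `{a,b}` to `{a-m,b-m}`. -/
def tauM (n m : ℕ) : Sym2 (ZMod (n*m+2)) → Sym2 (ZMod (n*m+2)) :=
  Sym2.map (fun x => x - (m : ZMod (n*m+2)))

/-- `p 0 → p 1 → ⋯ → p m` is a sectional path in `Γ^1_{A_{nm-1}}`. -/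
def IsSectPath1 (n m k : ℕ) (p : Fin (k+1) → Sym2 (ZMod (n*m+2))) : Prop :=
  (∀ s : Fin k, Arrow1 n m (p s.castSucc) (p s.succ)) ∧
  ∀ (s : ℕ) (_ : 1 ≤ s) (h2 : s + 1 ≤ k),
    tau1 n m (p ⟨s+1, by omega⟩) ≠ p ⟨s-1, by omega⟩

/-- An arrow of the `m`-th power `(Γ^1_{A_{nm-1}})^m` from `D` to `D'`:
a sectional path of length `m` from `D` to `D'` in `Γ^1_{A_{nm-1}}`. -/
def PowerArrow (n m : ℕ) (D D' : Sym2 (ZMod (n*m+2))) : Prop :=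
  ∃ p : Fin (m+1) → Sym2 (ZMod (n*m+2)),
    p 0 = D ∧ p (Fin.last m) = D' ∧ IsSectPath1 n m m p

/-- An arrow `D → D'` of `Γ^m_{A_{n-1}}`: `D` and `D'` are `m`-diagonals and
`D'` is obtained from `D = {a,b}` by replacing the endpoint `b` by `b+m`. -/
def ArrowM (n m : ℕ) (D D' : Sym2 (ZMod (n*m+2))) : Prop :=
  IsMDiagonal n m D ∧ IsMDiagonal n m D' ∧
    ∃ a b : ZMod (n*m+2), D = s(a, b) ∧ D' = s(a, b + (m : ZMod (n*m+2)))

namespace Aux13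

variable {n m : ℕ}

lemma cast_inj {c d : ℕ} (hc : c < n*m+2) (hd : d < n*m+2)
    (h : (c : ZMod (n*m+2)) = d) : c = d := by
  have h1 := ZMod.val_cast_of_lt hc
  have h2 := ZMod.val_cast_of_lt hd
  rw [← h1, ← h2, h]

lemma cast_ne_zero {c : ℕ} (h1 : 0 < c) (h2 : c < n*m+2) :
    (c : ZMod (n*m+2)) ≠ 0 := by
  intro h
  have := cast_inj h2 (show 0 < n*m+2 by omega) (by simpa using h)
  omega

lemma cast_ne_one {c : ℕ} (h1 : 1 < c) (h2 : c < n*m+2) :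
    (c : ZMod (n*m+2)) ≠ 1 := by
  intro h
  have := cast_inj h2 (show 1 < n*m+2 by omega) (by simpa using h)
  omega

lemma castNm1 : ((n*m+1 : ℕ) : ZMod (n*m+2)) = -1 := by
  have h0 : ((n*m+2 : ℕ) : ZMod (n*m+2)) = 0 := ZMod.natCast_self _
  push_cast at h0 ⊢
  linear_combination h0

lemma cast_ne_negOne {c : ℕ} (h2 : c < n*m+1) : (c : ZMod (n*m+2)) ≠ -1 := by
  intro h
  rw [← castNm1] at h
  have := cast_inj (by omega) (by omega) h
  omega

lemma isDiag_pair {a b : ZMod (n*m+2)} :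
    IsDiag n m s(a,b) ↔ b ≠ a ∧ b ≠ a + 1 ∧ b ≠ a - 1 := by
  constructor
  · rintro ⟨a', b', he, h1, h2, h3⟩
    rw [Sym2.eq_iff] at he
    rcases he with ⟨rfl, rfl⟩ | ⟨rfl, rfl⟩
    · exact ⟨h1, h2, h3⟩
    · refine ⟨fun h => h1 h.symm, fun h => h3 ?_, fun h => h2 ?_⟩
      · rw [h]; ring
      · rw [h]; ring
  · rintro ⟨h1, h2, h3⟩
    exact ⟨a, b, rfl, h1, h2, h3⟩

lemma isMDiag_pair (hn : 2 ≤ n) {a b : ZMod (n*m+2)} :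
    IsMDiagonal n m s(a,b) ↔
      ∃ k : ℕ, 1 ≤ k ∧ k ≤ n - 1 ∧ b = a + ((k*m+1 : ℕ) : ZMod (n*m+2)) := by
  constructor
  · rintro ⟨i, k, hk1, hk2, he⟩
    rw [Sym2.eq_iff] at he
    rcases he with ⟨rfl, rfl⟩ | ⟨rfl, rfl⟩
    · exact ⟨k, hk1, hk2, rfl⟩
    · refine ⟨n - k, by omega, by omega, ?_⟩
      have hnat : (k*m+1) + ((n-k)*m+1) = n*m+2 := by
        have h1 : (n-k)*m = n*m - k*m := Nat.sub_mul n k m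
        have h2 : k*m ≤ n*m := Nat.mul_le_mul_right m (by omega)
        omega
      have h0 : ((k*m+1 : ℕ) : ZMod (n*m+2)) + (((n-k)*m+1 : ℕ) : ZMod (n*m+2)) = 0 := by
        rw [← Nat.cast_add, hnat]; exact ZMod.natCast_self _
      linear_combination -h0
  · rintro ⟨k, hk1, hk2, rfl⟩
    exact ⟨a, k, hk1, hk2, rfl⟩

lemma km_bounds {k : ℕ} (hk1 : 1 ≤ k) (hk2 : k ≤ n - 1) (hn : 2 ≤ n) :
    m ≤ k*m ∧ k*m ≤ n*m - m := by
  have h1 : 1*m ≤ k*m := Nat.mul_le_mul_right m hk1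
  have h2 : k*m ≤ (n-1)*m := Nat.mul_le_mul_right m hk2
  have h3 : (n-1)*m = n*m - 1*m := Nat.sub_mul n 1 m
  have h4 : 1*m ≤ n*m := Nat.mul_le_mul_right m (by omega)
  omega

lemma mdiag_isDiag (hn : 2 ≤ n) (hm : 1 ≤ m) {D : Sym2 (ZMod (n*m+2))}
    (h : IsMDiagonal n m D) : IsDiag n m D := by
  obtain ⟨i, k, hk1, hk2, rfl⟩ := h
  obtain ⟨hb1, hb2⟩ := km_bounds (m := m) hk1 hk2 hn
  have hm2 : m ≤ n*m := by
    have := Nat.mul_le_mul_right m (show 1 ≤ n by omega); omega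
  rw [isDiag_pair]
  refine ⟨?_, ?_, ?_⟩
  · intro h
    exact cast_ne_zero (n := n) (m := m) (c := k*m+1) (by omega) (by omega)
      (by rwa [add_eq_left] at h)
  · intro h
    exact cast_ne_one (n := n) (m := m) (c := k*m+1) (by omega) (by omega)
      (by rwa [add_right_inj] at h)
  · intro h
    exact cast_ne_negOne (n := n) (m := m) (c := k*m+1) (by omega)
      (by linear_combination h)

lemma power_struct (hm : 1 ≤ m) {D D' : Sym2 (ZMod (n*m+2))}
    (h : PowerArrow n m D D') :
    ∃ a b : ZMod (n*m+2), D = s(a, b) ∧ D' = s(a, b + (m : ZMod (n*m+2))) ∧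
      IsDiag n m D ∧ IsDiag n m D' := by
  obtain ⟨p, h0, hl, harr, hsect⟩ := h
  have hz : (0 : Fin (m+1)) = ⟨0, by omega⟩ := by ext; simp
  obtain ⟨hd0, hd1, a, b, hp0, hp1⟩ := harr ⟨0, by omega⟩
  have hp0' : p ⟨0, by omega⟩ = s(a, b) := hp0
  have hp1' : p ⟨1, by omega⟩ = s(a, b + 1) := hp1
  have key : ∀ j, (hj : j + 1 ≤ m) →
      p ⟨j, by omega⟩ = s(a, b + (j : ZMod (n*m+2))) ∧
      p ⟨j+1, by omega⟩ = s(a, b + ((j+1 : ℕ) : ZMod (n*m+2))) := by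
    intro j
    induction j with
    | zero =>
      intro hj
      refine ⟨by simpa using hp0', by simpa using hp1'⟩
    | succ j ih =>
      intro hj
      obtain ⟨ih1, ih2⟩ := ih (by omega)
      refine ⟨ih2, ?_⟩
      obtain ⟨hdq0, hdq1, a', b', hq0, hq1⟩ := harr ⟨j+1, by omega⟩
      have hq0' : s(a, b + ((j+1 : ℕ) : ZMod (n*m+2))) = s(a', b') := by
        rw [← ih2]; exact hq0
      have hq1' : p ⟨j+1+1, by omega⟩ = s(a', b' + 1) := hq1
      rw [Sym2.eq_iff] at hq0'
      rcases hq0' with ⟨rfl, rfl⟩ | ⟨h1, h2⟩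
      · rw [show ((j+1+1 : ℕ) : ZMod (n*m+2)) = ((j+1 : ℕ) : ZMod (n*m+2)) + 1 by
          push_cast; ring, ← add_assoc]
        exact hq1'
      · exfalso
        apply hsect (j+1) (by omega) (by omega)
        have hpj : p ⟨j+1-1, by omega⟩ = s(a, b + (j : ZMod (n*m+2))) := ih1
        rw [hpj, hq1', tau1, Sym2.map_pair_eq]
        rw [← h2, ← h1]
        have e1 : b + ((j+1 : ℕ) : ZMod (n*m+2)) - 1 = b + (j : ZMod (n*m+2)) := by
          push_cast; ring
        have e2 : a + 1 - 1 = a := by ring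
        rw [e1, e2]
        exact Sym2.eq_swap
  have key2 : ∀ j, (hj : j ≤ m) → p ⟨j, by omega⟩ = s(a, b + (j : ZMod (n*m+2))) := by
    intro j hj
    rcases Nat.eq_zero_or_pos j with h | h
    · subst h; simpa using hp0'
    · obtain ⟨t, rfl⟩ : ∃ t, j = t + 1 := ⟨j - 1, by omega⟩
      have := (key t (by omega)).2
      simpa using this
  have hD : D = s(a, b) := by rw [← h0, hz]; simpa using key2 0 (by omega)
  have hD' : D' = s(a, b + (m : ZMod (n*m+2))) := by
    rw [← hl]
    have : Fin.last m = (⟨m, by omega⟩ : Fin (m+1)) := rfl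
    rw [this]
    exact key2 m (by omega)
  refine ⟨a, b, hD, hD', by rw [hD, ← hp0']; exact hd0, ?_⟩
  obtain ⟨_, hdlast, _, _, _, _⟩ := harr ⟨m-1, by omega⟩
  have hlast : p ⟨m-1+1, by omega⟩ = D' := by
    have e : (⟨m-1+1, by omega⟩ : Fin (m+1)) = Fin.last m := by
      ext; simp; omega
    rw [e, hl]
  rw [← hlast]
  exact hdlast

lemma arrowM_power (hn : 2 ≤ n) (hm : 1 ≤ m) {D D' : Sym2 (ZMod (n*m+2))}
    (h : ArrowM n m D D') : PowerArrow n m D D' := by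
  obtain ⟨hD, hD', a, b, rfl, rfl⟩ := h
  obtain ⟨k, hk1, hk2, hb⟩ := (isMDiag_pair hn).mp hD
  have hmn : 1*m ≤ n*m := Nat.mul_le_mul_right m (by omega)
  have hk2' : k ≤ n - 2 := by
    by_contra hc
    have hk : k = n - 1 := by omega
    have hnat : (n-1)*m+1 + m = n*m+1 := by
      have h1 : (n-1)*m = n*m - 1*m := Nat.sub_mul n 1 m
      omega
    have hbm : b + (m : ZMod (n*m+2)) = a - 1 := by
      rw [hb, hk]
      calc a + (((n-1)*m+1 : ℕ) : ZMod (n*m+2)) + (m : ZMod (n*m+2))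
          = a + ((((n-1)*m+1) + m : ℕ) : ZMod (n*m+2)) := by push_cast; ring
        _ = a + ((n*m+1 : ℕ) : ZMod (n*m+2)) := by rw [hnat]
        _ = a - 1 := by rw [castNm1]; ring
    exact (isDiag_pair.mp (mdiag_isDiag hn hm hD')).2.2 hbm
  have hb2 : k*m + 2*m ≤ n*m := by
    have h := Nat.mul_le_mul_right m (show k+2 ≤ n by omega)
    rw [add_mul] at h
    omega
  have hb1 : 1*m ≤ k*m := Nat.mul_le_mul_right m hk1
  have diagj : ∀ j : ℕ, j ≤ m → IsDiag n m s(a, b + ((j : ℕ) : ZMod (n*m+2))) := by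
    intro j hj
    have hco : b + ((j : ℕ) : ZMod (n*m+2)) = a + ((k*m+1+j : ℕ) : ZMod (n*m+2)) := by
      rw [hb]; push_cast; ring
    rw [hco, isDiag_pair]
    refine ⟨?_, ?_, ?_⟩
    · intro h
      exact cast_ne_zero (n := n) (m := m) (c := k*m+1+j) (by omega) (by omega)
        (by rwa [add_eq_left] at h)
    · intro h
      exact cast_ne_one (n := n) (m := m) (c := k*m+1+j) (by omega) (by omega)
        (by rwa [add_right_inj] at h)
    · intro h
      exact cast_ne_negOne (n := n) (m := m) (c := k*m+1+j) (by omega)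
        (by linear_combination h)
  refine ⟨fun j => s(a, b + ((j.val : ℕ) : ZMod (n*m+2))), by simp, by simp, ?_, ?_⟩
  · intro s
    refine ⟨?_, ?_, a, b + ((s.val : ℕ) : ZMod (n*m+2)), ?_, ?_⟩
    · have := diagj s.val (by omega)
      simpa using this
    · have := diagj (s.val+1) (by omega)
      simpa using this
    · rfl
    · show s(a, b + ((s.val+1 : ℕ) : ZMod (n*m+2))) = _
      rw [show ((s.val+1 : ℕ) : ZMod (n*m+2)) = ((s.val : ℕ) : ZMod (n*m+2)) + 1 by
        push_cast; ring, ← add_assoc]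
  · intro s hs1 hs2
    show tau1 n m s(a, b + ((s+1 : ℕ) : ZMod (n*m+2))) ≠ s(a, b + ((s-1 : ℕ) : ZMod (n*m+2)))
    rw [tau1, Sym2.map_pair_eq, Ne, Sym2.eq_iff]
    push_neg
    have hone : (1 : ZMod (n*m+2)) ≠ 0 := by
      have := cast_ne_zero (n := n) (m := m) (c := 1) (by omega) (by omega)
      simpa using this
    constructor
    · intro h1
      exfalso
      apply hone
      have : a - 1 = a → (1 : ZMod (n*m+2)) = 0 := by
        intro hh; linear_combination -hh
      exact this h1
    · intro h1 h2
      have hc : ((s+1 : ℕ) : ZMod (n*m+2)) = ((s : ℕ) : ZMod (n*m+2)) + 1 := by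
        push_cast; ring
      have hbs : b + ((s : ℕ) : ZMod (n*m+2)) = a := by
        linear_combination h2 - hc
      exact (isDiag_pair.mp (diagj s (by omega))).1 hbs

lemma iter_tau1_pair (j : ℕ) (x y : ZMod (n*m+2)) :
    (tau1 n m)^[j] s(x,y) = s(x - (j : ZMod (n*m+2)), y - (j : ZMod (n*m+2))) := by
  induction j with
  | zero => simp
  | succ j ih =>
    rw [Function.iterate_succ_apply', ih, tau1, Sym2.map_pair_eq]
    have e1 : x - (j : ZMod (n*m+2)) - 1 = x - ((j+1 : ℕ) : ZMod (n*m+2)) := by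
      push_cast; ring
    have e2 : y - (j : ZMod (n*m+2)) - 1 = y - ((j+1 : ℕ) : ZMod (n*m+2)) := by
      push_cast; ring
    rw [e1, e2]

def Rel (n m : ℕ) (X Y : Sym2 (ZMod (n*m+2))) : Prop :=
  PowerArrow n m X Y ∨ PowerArrow n m Y X ∨ Y = tauM n m X ∨ X = tauM n m Y

lemma rel_symm : Symmetric (Rel n m) := by
  intro X Y h
  rcases h with h|h|h|h
  · exact Or.inr (Or.inl h)
  · exact Or.inl h
  · exact Or.inr (Or.inr (Or.inr h))
  · exact Or.inr (Or.inr (Or.inl h))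

lemma rt_shift_down (x y : ZMod (n*m+2)) :
    Rel n m s(x, y) s(x - m, y - m) := by
  right; right; left
  rw [tauM, Sym2.map_pair_eq]

lemma rel_up (hn : 2 ≤ n) (hm : 1 ≤ m) (i : ZMod (n*m+2)) {k : ℕ}
    (hk1 : 1 ≤ k) (hk2 : k + 1 ≤ n - 1) :
    Rel n m s(i, i + ((k*m+1 : ℕ) : ZMod (n*m+2)))
            s(i, i + (((k+1)*m+1 : ℕ) : ZMod (n*m+2))) := by
  left
  apply arrowM_power hn hm
  refine ⟨⟨i, k, hk1, by omega, rfl⟩, ⟨i, k+1, by omega, hk2, rfl⟩,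
    i, i + ((k*m+1 : ℕ) : ZMod (n*m+2)), rfl, ?_⟩
  have e : (((k+1)*m+1 : ℕ) : ZMod (n*m+2)) =
      ((k*m+1 : ℕ) : ZMod (n*m+2)) + (m : ZMod (n*m+2)) := by push_cast; ring
  rw [e, ← add_assoc]

lemma rt_descend (hn : 2 ≤ n) (hm : 1 ≤ m) (i : ZMod (n*m+2)) :
    ∀ j : ℕ, j + 1 ≤ n - 1 →
      Relation.ReflTransGen (Rel n m)
        s(i, i + (((j+1)*m+1 : ℕ) : ZMod (n*m+2)))
        s(i, i + ((1*m+1 : ℕ) : ZMod (n*m+2))) := by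
  intro j
  induction j with
  | zero => intro _; exact Relation.ReflTransGen.refl
  | succ j ih =>
    intro hj
    exact Relation.ReflTransGen.head
      (rel_symm (rel_up hn hm i (by omega) (show (j+1)+1 ≤ n-1 by omega)))
      (ih (by omega))

lemma rt_inc (hn : 2 ≤ n) (hm : 1 ≤ m) (i : ZMod (n*m+2)) :
    Relation.ReflTransGen (Rel n m)
      s(i, i + ((1*m+1 : ℕ) : ZMod (n*m+2)))
      s(i + 1, (i + 1) + ((1*m+1 : ℕ) : ZMod (n*m+2))) := by
  set c : ZMod (n*m+2) := ((1*m+1 : ℕ) : ZMod (n*m+2)) with hc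
  have hnat : (1*m+1) + ((n-1)*m+1) = n*m+2 := by
    have h1 := Nat.sub_mul n 1 m
    have h2 : 1*m ≤ n*m := Nat.mul_le_mul_right m (by omega)
    omega
  have hzero : c + (((n-1)*m+1 : ℕ) : ZMod (n*m+2)) = 0 := by
    rw [hc, ← Nat.cast_add, hnat]; exact ZMod.natCast_self _
  have hre : s(i, i + c) = s(i + c, (i + c) + (((n-1)*m+1 : ℕ) : ZMod (n*m+2))) := by
    have he : (i + c) + (((n-1)*m+1 : ℕ) : ZMod (n*m+2)) = i := by
      linear_combination hzero
    rw [he]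
    exact Sym2.eq_swap
  rw [hre]
  have h1 := rt_descend hn hm (i + c) (n - 2) (by omega)
  have hn2 : n - 2 + 1 = n - 1 := by omega
  rw [hn2] at h1
  refine h1.trans ?_
  have hstep := rt_shift_down (n := n) (m := m) (i + c) (i + c + c)
  have e1 : i + c - (m : ZMod (n*m+2)) = i + 1 := by rw [hc]; push_cast; ring
  have e2 : i + c + c - (m : ZMod (n*m+2)) = (i + 1) + c := by rw [hc]; push_cast; ring
  rw [e1, e2] at hstep
  exact Relation.ReflTransGen.single hstep

lemma rt_add (hn : 2 ≤ n) (hm : 1 ≤ m) (i : ZMod (n*m+2)) : ∀ t : ℕ,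
    Relation.ReflTransGen (Rel n m)
      s(i, i + ((1*m+1 : ℕ) : ZMod (n*m+2)))
      s(i + ((t : ℕ) : ZMod (n*m+2)),
        (i + ((t : ℕ) : ZMod (n*m+2))) + ((1*m+1 : ℕ) : ZMod (n*m+2))) := by
  intro t
  induction t with
  | zero =>
    rw [show ((0 : ℕ) : ZMod (n*m+2)) = 0 from Nat.cast_zero, add_zero]
  | succ t ih =>
    refine ih.trans ?_
    have h := rt_inc hn hm (i + ((t : ℕ) : ZMod (n*m+2)))
    have e : i + ((t+1 : ℕ) : ZMod (n*m+2)) = (i + ((t : ℕ) : ZMod (n*m+2))) + 1 := by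
      push_cast; ring
    rw [e]
    exact h

lemma connect (hn : 2 ≤ n) (hm : 1 ≤ m) {D D' : Sym2 (ZMod (n*m+2))}
    (hD : IsMDiagonal n m D) (hD' : IsMDiagonal n m D') :
    Relation.ReflTransGen (Rel n m) D D' := by
  haveI : NeZero (n*m+2) := ⟨by omega⟩
  obtain ⟨i, k, hk1, hk2, rfl⟩ := hD
  obtain ⟨i', k', hk1', hk2', rfl⟩ := hD'
  have h1 : Relation.ReflTransGen (Rel n m)
      s(i, i + ((k*m+1 : ℕ) : ZMod (n*m+2)))
      s(i, i + ((1*m+1 : ℕ) : ZMod (n*m+2))) := by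
    obtain ⟨j, rfl⟩ : ∃ j, k = j + 1 := ⟨k - 1, by omega⟩
    exact rt_descend hn hm i j (by omega)
  have h2 : Relation.ReflTransGen (Rel n m)
      s(i', i' + ((k'*m+1 : ℕ) : ZMod (n*m+2)))
      s(i', i' + ((1*m+1 : ℕ) : ZMod (n*m+2))) := by
    obtain ⟨j, rfl⟩ : ∃ j, k' = j + 1 := ⟨k' - 1, by omega⟩
    exact rt_descend hn hm i' j (by omega)
  have h3 : Relation.ReflTransGen (Rel n m)
      s(i, i + ((1*m+1 : ℕ) : ZMod (n*m+2)))
      s(i', i' + ((1*m+1 : ℕ) : ZMod (n*m+2))) := by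
    have h := rt_add hn hm i (i' - i).val
    rwa [show i + (((i' - i).val : ℕ) : ZMod (n*m+2)) = i' from by
      rw [ZMod.natCast_zmod_val]; ring] at h
  exact h1.trans (h3.trans (by haveI : Std.Symm (Rel n m) := ⟨fun a b h => rel_symm h⟩; exact Std.Symm.symm _ _ h2))

end Aux13

/-- (a) If `D` is an `m`-diagonal and there is a sectional path of length `m`
in `Γ^1_{A_{nm-1}}` from `D` to a diagonal `D'`, then `D'` is an `m`-diagonal,
and vice versa; and `τ_1^m D = τ_m D` is an `m`-diagonal whenever `D` is (as
is its `τ_1^m`-preimage).  (b) For `m`-diagonals `D`, `D'` there is a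
sectional path of length `m` from `D` to `D'` in `Γ^1_{A_{nm-1}}` iff there is
an arrow `D → D'` in `Γ^m_{A_{n-1}}`.  Consequently, `Γ^m_{A_{n-1}}` is a
connected component of `(Γ^1_{A_{nm-1}})^m`: the set of `m`-diagonals is
closed under arrows of the power quiver (in both directions) and under the
translation `τ_1^m` (in both directions), and any two `m`-diagonals are
connected in `(Γ^1_{A_{nm-1}})^m`. -/
theorem stmt13 (n m : ℕ) (hn : 2 ≤ n) (hm : 1 ≤ m) :
    (∀ D D', IsMDiagonal n m D → PowerArrow n m D D' → IsMDiagonal n m D') ∧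
    (∀ D D', IsMDiagonal n m D' → PowerArrow n m D D' → IsMDiagonal n m D) ∧
    (∀ D, IsMDiagonal n m D →
      (tau1 n m)^[m] D = tauM n m D ∧ IsMDiagonal n m (tauM n m D)) ∧
    (∀ D, IsMDiagonal n m D →
      IsMDiagonal n m (Sym2.map (fun x => x + (m : ZMod (n*m+2))) D)) ∧
    (∀ D D', IsMDiagonal n m D → IsMDiagonal n m D' →
      (PowerArrow n m D D' ↔ ArrowM n m D D')) ∧
    (∀ D D', IsMDiagonal n m D → IsMDiagonal n m D' →
      Relation.ReflTransGen
        (fun X Y => PowerArrow n m X Y ∨ PowerArrow n m Y X ∨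
          Y = tauM n m X ∨ X = tauM n m Y) D D') := by
  have hmn1 : 1*m ≤ n*m := Nat.mul_le_mul_right m (by omega)
  refine ⟨?_, ?_, ?_, ?_, ?_, ?_⟩
  · -- (1) target of power arrow from m-diagonal is m-diagonal
    intro D D' hD hpa
    obtain ⟨a, b, rfl, rfl, hd, hd'⟩ := Aux13.power_struct hm hpa
    obtain ⟨k, hk1, hk2, hb⟩ := (Aux13.isMDiag_pair hn).mp hD
    have hk2' : k ≤ n - 2 := by
      by_contra hc
      have hk : k = n - 1 := by omega
      have hnat : (n-1)*m+1 + m = n*m+1 := by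
        have h1 : (n-1)*m = n*m - 1*m := Nat.sub_mul n 1 m
        omega
      have hbm : b + (m : ZMod (n*m+2)) = a - 1 := by
        rw [hb, hk]
        calc a + (((n-1)*m+1 : ℕ) : ZMod (n*m+2)) + (m : ZMod (n*m+2))
            = a + ((((n-1)*m+1) + m : ℕ) : ZMod (n*m+2)) := by push_cast; ring
          _ = a + ((n*m+1 : ℕ) : ZMod (n*m+2)) := by rw [hnat]
          _ = a - 1 := by rw [Aux13.castNm1]; ring
      exact (Aux13.isDiag_pair.mp hd').2.2 hbm
    refine (Aux13.isMDiag_pair hn).mpr ⟨k+1, by omega, by omega, ?_⟩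
    rw [hb]
    push_cast
    ring
  · -- (2) source of power arrow into m-diagonal is m-diagonal
    intro D D' hD' hpa
    obtain ⟨a, b, rfl, rfl, hd, hd'⟩ := Aux13.power_struct hm hpa
    obtain ⟨k, hk1, hk2, hb⟩ := (Aux13.isMDiag_pair hn).mp hD'
    have hk1' : 2 ≤ k := by
      by_contra hc
      have hk : k = 1 := by omega
      have hba : b = a + 1 := by
        rw [hk] at hb
        have e : ((1*m+1 : ℕ) : ZMod (n*m+2)) = (m : ZMod (n*m+2)) + 1 := by
          push_cast; ring
        linear_combination hb + e
      exact (Aux13.isDiag_pair.mp hd).2.1 hba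
    refine (Aux13.isMDiag_pair hn).mpr ⟨k-1, by omega, by omega, ?_⟩
    have hnat : (k-1)*m+1 + m = k*m+1 := by
      have h1 : (k-1)*m = k*m - 1*m := Nat.sub_mul k 1 m
      have h2 : 1*m ≤ k*m := Nat.mul_le_mul_right m (by omega)
      omega
    have hz : (((k-1)*m+1 : ℕ) : ZMod (n*m+2)) + (m : ZMod (n*m+2))
        = ((k*m+1 : ℕ) : ZMod (n*m+2)) := by
      rw [show (m : ZMod (n*m+2)) = ((m : ℕ) : ZMod (n*m+2)) from rfl,
        ← Nat.cast_add, hnat]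
    linear_combination hb - hz
  · -- (3) tau1^[m] = tauM and preserves m-diagonals
    intro D hD
    obtain ⟨i, k, hk1, hk2, rfl⟩ := hD
    constructor
    · rw [Aux13.iter_tau1_pair, tauM, Sym2.map_pair_eq]
    · rw [tauM, Sym2.map_pair_eq]
      refine ⟨i - (m : ZMod (n*m+2)), k, hk1, hk2, ?_⟩
      have e : i + ((k*m+1 : ℕ) : ZMod (n*m+2)) - (m : ZMod (n*m+2))
          = (i - (m : ZMod (n*m+2))) + ((k*m+1 : ℕ) : ZMod (n*m+2)) := by ring
      rw [e]
  · -- (4) shift by +m preserves m-diagonals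
    intro D hD
    obtain ⟨i, k, hk1, hk2, rfl⟩ := hD
    rw [Sym2.map_pair_eq]
    refine ⟨i + (m : ZMod (n*m+2)), k, hk1, hk2, ?_⟩
    have e : i + ((k*m+1 : ℕ) : ZMod (n*m+2)) + (m : ZMod (n*m+2))
        = (i + (m : ZMod (n*m+2))) + ((k*m+1 : ℕ) : ZMod (n*m+2)) := by ring
    rw [e]
  · -- (5) PowerArrow iff ArrowM
    intro D D' hD hD'
    constructor
    · intro hpa
      obtain ⟨a, b, rfl, rfl, _, _⟩ := Aux13.power_struct hm hpa
      exact ⟨hD, hD', a, b, rfl, rfl⟩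
    · exact Aux13.arrowM_power hn hm
  · -- (6) connectivity
    intro D D' hD hD'
    exact Aux13.connect hn hm hD hD'
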